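/- arXiv:2003.00134 — 2 statements merged into one kernel-verified Lean document; each statement's English description precedes it below -/
import Mathlib

section
/- For one-dimensional probability measures with finite p-th moments, the Wasserstein-p distance equals the L^p distance between their quantile functions: W_p(P, Q)^p = ∫_0^1 |F_P^{-1}(t) − F_Q^{-1}(t)|^p dt, where F^{-1} denotes the generalized inverse (quantile function) of the CDF. -/
open MeasureTheory Set Filter Topology
open scoped ENNReal

/-- Cumulative distribution function of a measure on `ℝ`. -/
noncomputable def cdf (P : Measure ℝ) (x : ℝ) : ℝ := (P (Set.Iic x)).toReal

/-- Quantile function (generalized inverse of the CDF). -/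
noncomputable def quantile (P : Measure ℝ) (t : ℝ) : ℝ :=
  sInf {x : ℝ | t ≤ cdf P x}

section cdfq
variable {P : Measure ℝ} [IsProbabilityMeasure P]


lemma cdf_eq (x : ℝ) : cdf P x = ProbabilityTheory.cdf P x :=
  (ProbabilityTheory.cdf_eq_real P x).symm

lemma ofReal_cdf' (x : ℝ) : ENNReal.ofReal (cdf P x) = P (Set.Iic x) := by
  rw [cdf_eq, ProbabilityTheory.ofReal_cdf]

lemma cdf_mono : Monotone (cdf P) := by
  have := ProbabilityTheory.monotone_cdf P
  intro a b hab; rw [cdf_eq, cdf_eq]; exact this hab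

lemma quantile_le_iff {t x : ℝ} (ht : t ∈ Set.Ioo (0:ℝ) 1) :
    quantile P t ≤ x ↔ t ≤ cdf P x := by
  obtain ⟨ht0, ht1⟩ := ht
  have hne : {z : ℝ | t ≤ cdf P z}.Nonempty := by
    have h := ProbabilityTheory.tendsto_cdf_atTop P
    have : ∀ᶠ z in atTop, t < ProbabilityTheory.cdf P z :=
      h.eventually_const_lt ht1
    obtain ⟨z, hz⟩ := this.exists
    exact ⟨z, by rw [Set.mem_setOf_eq, cdf_eq]; exact hz.le⟩
  obtain ⟨b, hb⟩ : ∃ b : ℝ, cdf P b < t := by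
    have h := ProbabilityTheory.tendsto_cdf_atBot P
    have : ∀ᶠ z in atBot, ProbabilityTheory.cdf P z < t :=
      h.eventually_lt_const ht0
    obtain ⟨z, hz⟩ := this.exists
    exact ⟨z, by rw [cdf_eq]; exact hz⟩
  have hbdd : BddBelow {z : ℝ | t ≤ cdf P z} := by
    refine ⟨b, fun z hz => ?_⟩
    by_contra hzb
    exact absurd (le_trans hz (cdf_mono (le_of_not_ge hzb))) (not_le.2 hb)
  constructor
  · intro h
    -- right continuity
    have hseq : Tendsto (fun n : ℕ => x + 1 / (n + 1)) atTop (𝓝 x) := by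
      simpa using (tendsto_const_nhds (x := x)).add tendsto_one_div_add_atTop_nhds_zero_nat
    have hcont : ContinuousWithinAt (ProbabilityTheory.cdf P) (Set.Ici x) x :=
      (ProbabilityTheory.cdf P).right_continuous x
    have htend : Tendsto (fun n : ℕ => cdf P (x + 1 / (n + 1))) atTop (𝓝 (cdf P x)) := by
      rw [cdf_eq]
      have : Tendsto (fun n : ℕ => x + 1 / (n + 1)) atTop (𝓝[Set.Ici x] x) := by
        rw [tendsto_nhdsWithin_iff]
        refine ⟨hseq, Eventually.of_forall fun n => ?_⟩
        have : (0:ℝ) < 1 / (n + 1) := by positivity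
        simp [Set.mem_Ici]; linarith
      have := hcont.tendsto.comp this
      convert this using 2 with n
      exact cdf_eq _
    refine ge_of_tendsto htend (Eventually.of_forall fun n => ?_)
    have hlt : quantile P t < x + 1 / (n + 1) := by
      have : (0:ℝ) < 1 / (n + 1) := by positivity
      linarith
    obtain ⟨w, hw, hwlt⟩ := exists_lt_of_csInf_lt hne hlt
    exact le_trans hw (cdf_mono hwlt.le)
  · intro h
    exact csInf_le hbdd h



lemma cdf_nonneg' (x : ℝ) : 0 ≤ cdf P x := ENNReal.toReal_nonneg
lemma cdf_le_one' (x : ℝ) : cdf P x ≤ 1 := by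
  have h : P (Set.Iic x) ≤ 1 := prob_le_one
  have := ENNReal.toReal_mono (by simp) h
  simpa [cdf] using this

/-- measurable surrogate for the quantile function -/
noncomputable def qm (P : Measure ℝ) (t : ℝ) : ℝ :=
  if t ∈ Set.Ioo (0:ℝ) 1 then quantile P t else 0

lemma qm_eqOn : Set.EqOn (qm P) (quantile P) (Set.Ioo (0:ℝ) 1) := fun t ht => if_pos ht

lemma qm_preimage_Iic (x : ℝ) :
    qm P ⁻¹' Set.Iic x =
      (Set.Iic (cdf P x) ∩ Set.Ioo 0 1) ∪ (if 0 ≤ x then (Set.Ioo (0:ℝ) 1)ᶜ else ∅) := by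
  ext t
  by_cases ht : t ∈ Set.Ioo (0:ℝ) 1
  · simp only [Set.mem_preimage, Set.mem_Iic, qm, if_pos ht, Set.mem_union, Set.mem_inter_iff,
      Set.mem_compl_iff]
    rw [quantile_le_iff ht]
    constructor
    · intro h; exact Or.inl ⟨h, ht⟩
    · rintro (⟨h, -⟩ | h)
      · exact h
      · split at h <;> simp_all
  · simp only [Set.mem_preimage, Set.mem_Iic, qm, if_neg ht, Set.mem_union, Set.mem_inter_iff,
      Set.mem_compl_iff]
    constructor
    · intro h; right; rw [if_pos h]; exact ht
    · rintro (⟨-, h⟩ | h)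
      · exact absurd h ht
      · split at h
        · assumption
        · simp_all

lemma qm_measurable : Measurable (qm P) := by
  apply measurable_of_Iic
  intro x
  rw [qm_preimage_Iic]
  refine (measurableSet_Iic.inter measurableSet_Ioo).union ?_
  split
  · exact measurableSet_Ioo.compl
  · exact MeasurableSet.empty

lemma map_qm : (volume.restrict (Set.Ioo (0:ℝ) 1)).map (qm P) = P := by
  have hfin : IsFiniteMeasure ((volume.restrict (Set.Ioo (0:ℝ) 1)).map (qm P)) := by
    constructor
    rw [Measure.map_apply qm_measurable MeasurableSet.univ]
    simp [Real.volume_Ioo]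
  refine @Measure.ext_of_Iic ℝ _ _ _ _ _ _ _ _ hfin (fun x => ?_)
  rw [Measure.map_apply qm_measurable measurableSet_Iic, Measure.restrict_apply
    (qm_measurable measurableSet_Iic), qm_preimage_Iic]
  have hc0 : 0 ≤ cdf P x := cdf_nonneg' x
  have hc1 : cdf P x ≤ 1 := cdf_le_one' x
  have : ((Set.Iic (cdf P x) ∩ Set.Ioo 0 1) ∪
      (if 0 ≤ x then (Set.Ioo (0:ℝ) 1)ᶜ else ∅)) ∩ Set.Ioo 0 1
      = Set.Iic (cdf P x) ∩ Set.Ioo 0 1 := by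
    rw [Set.union_inter_distrib_right]
    have : (if 0 ≤ x then (Set.Ioo (0:ℝ) 1)ᶜ else ∅) ∩ Set.Ioo 0 1 = ∅ := by
      split <;> simp
    rw [this, Set.union_empty, Set.inter_assoc, Set.inter_self]
  rw [this, ← ofReal_cdf' x]
  rcases lt_or_eq_of_le hc1 with h1 | h1
  · have : Set.Iic (cdf P x) ∩ Set.Ioo 0 1 = Set.Ioc 0 (cdf P x) := by
      ext t
      simp only [Set.mem_inter_iff, Set.mem_Iic, Set.mem_Ioo, Set.mem_Ioc]
      constructor
      · rintro ⟨h, h2, h3⟩; exact ⟨h2, h⟩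
      · rintro ⟨h2, h⟩; exact ⟨h, h2, lt_of_le_of_lt h h1⟩
    rw [this, Real.volume_Ioc, sub_zero]
  · have : Set.Iic (cdf P x) ∩ Set.Ioo 0 1 = Set.Ioo 0 1 := by
      rw [Set.inter_eq_right]; intro t ht; simp only [Set.mem_Iic]
      rw [← h1] at ht; exact ht.2.le
    rw [this, Real.volume_Ioo, sub_zero, ← h1]


end cdfq

/-- the "corner" set used in the layer-cake representation of `|x-y|^p` -/
def Scor (s t : ℝ) : Set (ℝ × ℝ) :=
  {q | (q.2 ≤ s ∧ t < q.1) ∨ (q.1 ≤ s ∧ t < q.2)}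

lemma Scor_meas1 (s t : ℝ) : MeasurableSet {q : ℝ × ℝ | q.2 ≤ s ∧ t < q.1} :=
  (measurable_snd measurableSet_Iic).inter (measurable_fst measurableSet_Ioi)

lemma Scor_meas2 (s t : ℝ) : MeasurableSet {q : ℝ × ℝ | q.1 ≤ s ∧ t < q.2} :=
  (measurable_fst measurableSet_Iic).inter (measurable_snd measurableSet_Ioi)

lemma Scor_meas (s t : ℝ) : MeasurableSet (Scor s t) :=
  (Scor_meas1 s t).union (Scor_meas2 s t)

section couple
variable {P Q : Measure ℝ} [IsProbabilityMeasure P] [IsProbabilityMeasure Q]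

/-- the quantile coupling -/
noncomputable def qcoup (P Q : Measure ℝ) : Measure (ℝ × ℝ) :=
  (volume.restrict (Set.Ioo (0:ℝ) 1)).map (fun t => (qm P t, qm Q t))

lemma qpair_measurable : Measurable (fun t => (qm P t, qm Q t)) :=
  qm_measurable.prodMk qm_measurable

lemma qcoup_fst : (qcoup P Q).map Prod.fst = P := by
  rw [qcoup, Measure.map_map measurable_fst qpair_measurable]; exact map_qm

lemma qcoup_snd : (qcoup P Q).map Prod.snd = Q := by
  rw [qcoup, Measure.map_map measurable_snd qpair_measurable]; exact map_qm

instance qcoup_prob : IsProbabilityMeasure (qcoup P Q) := by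
  constructor
  rw [qcoup, Measure.map_apply qpair_measurable MeasurableSet.univ]
  simp [Real.volume_Ioo]

lemma qm_aux (s t : ℝ) :
    volume.restrict (Set.Ioo (0:ℝ) 1) {u : ℝ | qm Q u ≤ s ∧ t < qm P u}
      ≤ Q (Set.Iic s) - P (Set.Iic t) := by
  rw [Measure.restrict_apply' measurableSet_Ioo]
  have hsub : {u : ℝ | qm Q u ≤ s ∧ t < qm P u} ∩ Set.Ioo 0 1
      ⊆ Set.Ioc (cdf P t) (cdf Q s) := by
    rintro u ⟨⟨h1, h2⟩, hu⟩
    rw [qm_eqOn hu] at h1 h2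
    constructor
    · by_contra h
      exact absurd ((quantile_le_iff hu).2 (le_of_not_gt h)) (not_le.2 h2)
    · exact (quantile_le_iff hu).1 h1
  calc volume ({u : ℝ | qm Q u ≤ s ∧ t < qm P u} ∩ Set.Ioo 0 1)
      ≤ volume (Set.Ioc (cdf P t) (cdf Q s)) := measure_mono hsub
    _ = ENNReal.ofReal (cdf Q s - cdf P t) := Real.volume_Ioc
    _ = ENNReal.ofReal (cdf Q s) - ENNReal.ofReal (cdf P t) :=
        ENNReal.ofReal_sub _ (cdf_nonneg' t)
    _ = Q (Set.Iic s) - P (Set.Iic t) := by rw [ofReal_cdf', ofReal_cdf']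

lemma qcoup_half1_le (s t : ℝ) :
    qcoup P Q {q : ℝ × ℝ | q.2 ≤ s ∧ t < q.1} ≤ Q (Set.Iic s) - P (Set.Iic t) := by
  rw [qcoup, Measure.map_apply qpair_measurable (Scor_meas1 s t)]
  exact qm_aux s t

lemma qcoup_half2_le (s t : ℝ) :
    qcoup P Q {q : ℝ × ℝ | q.1 ≤ s ∧ t < q.2} ≤ P (Set.Iic s) - Q (Set.Iic t) := by
  rw [qcoup, Measure.map_apply qpair_measurable (Scor_meas2 s t)]
  have : (fun u => (qm P u, qm Q u)) ⁻¹' {q : ℝ × ℝ | q.1 ≤ s ∧ t < q.2}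
      = {u : ℝ | qm P u ≤ s ∧ t < qm Q u} := rfl
  rw [this]
  exact qm_aux s t

lemma coup_half1_ge (γ : Measure (ℝ × ℝ)) (hfst : γ.map Prod.fst = P)
    (hsnd : γ.map Prod.snd = Q) (s t : ℝ) :
    Q (Set.Iic s) - P (Set.Iic t) ≤ γ {q : ℝ × ℝ | q.2 ≤ s ∧ t < q.1} := by
  rw [tsub_le_iff_right, ← hsnd, ← hfst,
    Measure.map_apply measurable_snd measurableSet_Iic,
    Measure.map_apply measurable_fst measurableSet_Iic]
  have hsub : Prod.snd ⁻¹' Set.Iic s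
      ⊆ {q : ℝ × ℝ | q.2 ≤ s ∧ t < q.1} ∪ Prod.fst ⁻¹' Set.Iic t := by
    intro q hq
    rcases le_or_gt q.1 t with h | h
    · exact Or.inr h
    · exact Or.inl ⟨hq, h⟩
  exact le_trans (measure_mono hsub) (measure_union_le _ _)

lemma coup_half2_ge (γ : Measure (ℝ × ℝ)) (hfst : γ.map Prod.fst = P)
    (hsnd : γ.map Prod.snd = Q) (s t : ℝ) :
    P (Set.Iic s) - Q (Set.Iic t) ≤ γ {q : ℝ × ℝ | q.1 ≤ s ∧ t < q.2} := by
  rw [tsub_le_iff_right, ← hfst, ← hsnd,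
    Measure.map_apply measurable_fst measurableSet_Iic,
    Measure.map_apply measurable_snd measurableSet_Iic]
  have hsub : Prod.fst ⁻¹' Set.Iic s
      ⊆ {q : ℝ × ℝ | q.1 ≤ s ∧ t < q.2} ∪ Prod.snd ⁻¹' Set.Iic t := by
    intro q hq
    rcases le_or_gt q.2 t with h | h
    · exact Or.inr h
    · exact Or.inl ⟨hq, h⟩
  exact le_trans (measure_mono hsub) (measure_union_le _ _)

/-- key comparison: the quantile coupling puts less mass on every corner set -/
lemma qcoup_Scor_le (γ : Measure (ℝ × ℝ)) (hfst : γ.map Prod.fst = P)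
    (hsnd : γ.map Prod.snd = Q) {s t : ℝ} (hst : s ≤ t) :
    qcoup P Q (Scor s t) ≤ γ (Scor s t) := by
  have hdisj : Disjoint {q : ℝ × ℝ | q.2 ≤ s ∧ t < q.1} {q : ℝ × ℝ | q.1 ≤ s ∧ t < q.2} := by
    rw [Set.disjoint_left]
    rintro q ⟨h1, h2⟩ ⟨h3, h4⟩
    exact absurd (lt_of_le_of_lt (h3.trans hst) h2) (lt_irrefl q.1)
  calc qcoup P Q (Scor s t)
      ≤ qcoup P Q {q : ℝ × ℝ | q.2 ≤ s ∧ t < q.1}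
        + qcoup P Q {q : ℝ × ℝ | q.1 ≤ s ∧ t < q.2} := measure_union_le _ _
    _ ≤ (Q (Set.Iic s) - P (Set.Iic t)) + (P (Set.Iic s) - Q (Set.Iic t)) :=
        add_le_add (qcoup_half1_le s t) (qcoup_half2_le s t)
    _ ≤ γ {q : ℝ × ℝ | q.2 ≤ s ∧ t < q.1} + γ {q : ℝ × ℝ | q.1 ≤ s ∧ t < q.2} :=
        add_le_add (coup_half1_ge γ hfst hsnd s t) (coup_half2_ge γ hfst hsnd s t)
    _ = γ (Scor s t) := (measure_union hdisj (Scor_meas2 s t)).symm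

end couple

/-- calculus lemma A : inner integral -/
lemma calcA {p : ℝ} (hp : 1 < p) {s x : ℝ} (hsx : s < x) :
    ∫⁻ t in Set.Ioo s x, ENNReal.ofReal (p * (p - 1) * (t - s) ^ (p - 2))
      = ENNReal.ofReal (p * (x - s) ^ (p - 1)) := by
  have hp1 : (0:ℝ) < p - 1 := by linarith
  have hii : IntervalIntegrable (fun t => p * (p - 1) * (t - s) ^ (p - 2)) volume s x := by
    have h0 : IntervalIntegrable (fun u : ℝ => u ^ (p - 2)) volume 0 (x - s) :=
      intervalIntegral.intervalIntegrable_rpow' (by linarith)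
    have h1 : IntervalIntegrable (fun u : ℝ => (u - s) ^ (p - 2)) volume (0 + s) ((x - s) + s) :=
      h0.comp_sub_right s
    simpa using (h1.const_mul (p * (p - 1)))
  have hint : IntegrableOn (fun t => p * (p - 1) * (t - s) ^ (p - 2)) (Set.Ioo s x) volume := by
    rw [intervalIntegrable_iff_integrableOn_Ioo_of_le hsx.le] at hii
    exact hii
  have hnn : 0 ≤ᵐ[volume.restrict (Set.Ioo s x)]
      fun t => p * (p - 1) * (t - s) ^ (p - 2) := by
    refine (ae_restrict_iff' measurableSet_Ioo).2 (Eventually.of_forall fun t ht => ?_)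
    have : (0:ℝ) ≤ t - s := by linarith [ht.1]
    positivity
  rw [← ofReal_integral_eq_lintegral_ofReal hint hnn]
  congr 1
  rw [← MeasureTheory.integral_Ioc_eq_integral_Ioo, ← intervalIntegral.integral_of_le hsx.le]
  have hsub : (∫ t in s..x, (t - s) ^ (p - 2)) = ∫ u in (0:ℝ)..(x - s), u ^ (p - 2) := by
    have := intervalIntegral.integral_comp_sub_right (a := s) (b := x)
      (fun u : ℝ => u ^ (p - 2)) s
    simpa using this
  rw [intervalIntegral.integral_const_mul, hsub, integral_rpow (Or.inl (by linarith))]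
  rw [Real.zero_rpow (by linarith : p - 2 + 1 ≠ 0)]
  have : p - 2 + 1 = p - 1 := by ring
  rw [this]
  field_simp
  ring

/-- calculus lemma B : outer integral -/
lemma calcB {p : ℝ} (hp : 1 ≤ p) {y x : ℝ} (hyx : y ≤ x) :
    ∫⁻ s in Set.Ico y x, ENNReal.ofReal (p * (x - s) ^ (p - 1))
      = ENNReal.ofReal ((x - y) ^ p) := by
  have hp0 : (0:ℝ) < p := by linarith
  have hii : IntervalIntegrable (fun s => p * (x - s) ^ (p - 1)) volume y x := by
    have h0 : IntervalIntegrable (fun u : ℝ => u ^ (p - 1)) volume (x - x) (x - y) :=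
      intervalIntegral.intervalIntegrable_rpow' (by linarith)
    have h1 : IntervalIntegrable (fun u : ℝ => (x - u) ^ (p - 1)) volume y x := by
      have := (h0.comp_sub_left x).symm
      simpa using this
    simpa using (h1.const_mul p)
  have hint : IntegrableOn (fun s => p * (x - s) ^ (p - 1)) (Set.Ico y x) volume := by
    rw [intervalIntegrable_iff_integrableOn_Ico_of_le hyx] at hii
    exact hii
  have hnn : 0 ≤ᵐ[volume.restrict (Set.Ico y x)] fun s => p * (x - s) ^ (p - 1) := by
    refine (ae_restrict_iff' measurableSet_Ico).2 (Eventually.of_forall fun s hs => ?_)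
    have : (0:ℝ) ≤ x - s := by linarith [hs.2]
    positivity
  rw [← ofReal_integral_eq_lintegral_ofReal hint hnn]
  congr 1
  rw [MeasureTheory.integral_Ico_eq_integral_Ioo, ← MeasureTheory.integral_Ioc_eq_integral_Ioo,
    ← intervalIntegral.integral_of_le hyx]
  have hsub : (∫ s in y..x, (x - s) ^ (p - 1)) = ∫ u in (0:ℝ)..(x - y), u ^ (p - 1) := by
    have := intervalIntegral.integral_comp_sub_left (a := y) (b := x)
      (fun u : ℝ => u ^ (p - 1)) x
    simpa using this
  rw [intervalIntegral.integral_const_mul, hsub, integral_rpow (Or.inl (by linarith))]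
  rw [Real.zero_rpow (by linarith : p - 1 + 1 ≠ 0)]
  have : p - 1 + 1 = p := by ring
  rw [this]
  field_simp
  ring


/-- kernel weight (`ℝ≥0∞`-valued so that it is measurable for every `p`) -/
noncomputable def kerK (p s t : ℝ) : ℝ≥0∞ :=
  ENNReal.ofReal (p * (p - 1)) * ENNReal.ofReal (t - s) ^ (p - 2)

lemma kerK_eq {p s t : ℝ} (hp : 1 ≤ p) (hst : s < t) :
    kerK p s t = ENNReal.ofReal (p * (p - 1) * (t - s) ^ (p - 2)) := by
  rw [kerK, ENNReal.ofReal_rpow_of_pos (by linarith), ← ENNReal.ofReal_mul (by nlinarith)]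

/-- the layer-cake integrand for `p > 1` -/
noncomputable def kerf (p : ℝ) (z : (ℝ × ℝ) × (ℝ × ℝ)) : ℝ≥0∞ :=
  ({w : (ℝ × ℝ) × (ℝ × ℝ) | w.2.1 < w.2.2 ∧ w.1 ∈ Scor w.2.1 w.2.2}.indicator
    (fun w => kerK p w.2.1 w.2.2)) z

lemma kerf_meas_set :
    MeasurableSet {w : (ℝ × ℝ) × (ℝ × ℝ) | w.2.1 < w.2.2 ∧ w.1 ∈ Scor w.2.1 w.2.2} := by
  have h1 : MeasurableSet {w : (ℝ × ℝ) × (ℝ × ℝ) | w.2.1 < w.2.2} :=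
    measurableSet_lt measurable_snd.fst measurable_snd.snd
  have h2 : MeasurableSet {w : (ℝ × ℝ) × (ℝ × ℝ) | w.1.2 ≤ w.2.1 ∧ w.2.2 < w.1.1} :=
    (measurableSet_le measurable_fst.snd measurable_snd.fst).inter
      (measurableSet_lt measurable_snd.snd measurable_fst.fst)
  have h3 : MeasurableSet {w : (ℝ × ℝ) × (ℝ × ℝ) | w.1.1 ≤ w.2.1 ∧ w.2.2 < w.1.2} :=
    (measurableSet_le measurable_fst.fst measurable_snd.fst).inter
      (measurableSet_lt measurable_snd.snd measurable_fst.snd)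
  exact h1.inter (h2.union h3)

lemma kerf_meas {p : ℝ} : Measurable (kerf p) := by
  have hκ : Measurable (fun w : (ℝ × ℝ) × (ℝ × ℝ) => kerK p w.2.1 w.2.2) := by
    apply Measurable.const_mul
    exact ENNReal.continuous_rpow_const.measurable.comp
      (ENNReal.measurable_ofReal.comp (measurable_snd.snd.sub measurable_snd.fst))
  exact hκ.indicator kerf_meas_set

/-- pointwise layer-cake identity, ordered case -/
lemma kerf_pointwise_le {p : ℝ} (hp : 1 < p) {x y : ℝ} (hyx : y ≤ x) :
    ∫⁻ st : ℝ × ℝ, kerf p ((x, y), st) = ENNReal.ofReal (|x - y| ^ p) := by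
  have hregion : ∀ st : ℝ × ℝ, kerf p ((x, y), st)
      = (Set.Ico y x).indicator (fun s =>
          (Set.Ioo s x).indicator (fun t => kerK p s t) st.2) st.1 := by
    rintro ⟨s, t⟩
    classical
    simp only [kerf, Set.indicator_apply, Set.mem_setOf_eq]
    by_cases hs : s ∈ Set.Ico y x
    · rw [if_pos hs]
      by_cases ht : t ∈ Set.Ioo s x
      · rw [if_pos, if_pos ht]
        exact ⟨ht.1, Or.inl ⟨hs.1, ht.2⟩⟩
      · rw [if_neg, if_neg ht]
        rintro ⟨hst, (⟨h1, h2⟩ | ⟨h1, h2⟩)⟩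
        · exact ht ⟨hst, h2⟩
        · exact absurd (lt_of_le_of_lt h1 hs.2) (lt_irrefl x)
    · rw [if_neg hs, if_neg]
      rintro ⟨hst, (⟨h1, h2⟩ | ⟨h1, h2⟩)⟩
      · exact hs ⟨h1, lt_trans hst h2⟩
      · exact hs ⟨le_trans hyx h1, lt_of_lt_of_le (lt_trans hst h2) hyx⟩
  calc ∫⁻ st : ℝ × ℝ, kerf p ((x, y), st)
      = ∫⁻ s, ∫⁻ t, kerf p ((x, y), (s, t)) := by
        rw [MeasureTheory.Measure.volume_eq_prod, lintegral_prod]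
        exact (kerf_meas.comp measurable_prodMk_left).aemeasurable
    _ = ∫⁻ s, (Set.Ico y x).indicator (fun s => ENNReal.ofReal (p * (x - s) ^ (p - 1))) s := by
        refine lintegral_congr fun s => ?_
        by_cases hs : s ∈ Set.Ico y x
        · rw [Set.indicator_of_mem hs]
          have : ∀ t : ℝ, kerf p ((x, y), (s, t))
              = (Set.Ioo s x).indicator (fun t => kerK p s t) t := by
            intro t
            rw [hregion (s, t), Set.indicator_of_mem hs]
          rw [lintegral_congr this, lintegral_indicator measurableSet_Ioo, ← calcA hp hs.2]
          refine setLIntegral_congr_fun measurableSet_Ioo (fun t ht => ?_)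
          exact kerK_eq hp.le ht.1
        · rw [Set.indicator_of_notMem hs]
          have : ∀ t : ℝ, kerf p ((x, y), (s, t)) = 0 := by
            intro t
            rw [hregion (s, t), Set.indicator_of_notMem hs]
          rw [lintegral_congr this, lintegral_zero]
    _ = ENNReal.ofReal (|x - y| ^ p) := by
        rw [lintegral_indicator measurableSet_Ico, calcB hp.le hyx,
          abs_of_nonneg (sub_nonneg.2 hyx)]

lemma kerf_symm {p : ℝ} (x y : ℝ) (st : ℝ × ℝ) : kerf p ((x, y), st) = kerf p ((y, x), st) := by
  classical
  simp only [kerf, Set.indicator_apply, Set.mem_setOf_eq]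
  congr 1
  simp only [Set.mem_setOf_eq, eq_iff_iff, Scor]
  tauto

/-- pointwise layer-cake identity -/
lemma kerf_pointwise {p : ℝ} (hp : 1 < p) (x y : ℝ) :
    ∫⁻ st : ℝ × ℝ, kerf p ((x, y), st) = ENNReal.ofReal (|x - y| ^ p) := by
  rcases le_total y x with h | h
  · exact kerf_pointwise_le hp h
  · rw [abs_sub_comm, ← kerf_pointwise_le hp h]
    exact lintegral_congr fun st => kerf_symm x y st

/-- layer-cake identity for a measure (p > 1) -/
lemma layer_gt {p : ℝ} (hp : 1 < p) (γ : Measure (ℝ × ℝ)) [SFinite γ] :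
    ∫⁻ q, ENNReal.ofReal (|q.1 - q.2| ^ p) ∂γ
      = ∫⁻ st : ℝ × ℝ, (if st.1 < st.2 then kerK p st.1 st.2 else 0) * γ (Scor st.1 st.2) := by
  have h1 : ∀ q : ℝ × ℝ, ENNReal.ofReal (|q.1 - q.2| ^ p) = ∫⁻ st : ℝ × ℝ, kerf p (q, st) :=
    fun q => (kerf_pointwise hp q.1 q.2).symm
  calc ∫⁻ q, ENNReal.ofReal (|q.1 - q.2| ^ p) ∂γ
      = ∫⁻ q, ∫⁻ st : ℝ × ℝ, kerf p (q, st) ∂volume ∂γ := lintegral_congr h1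
    _ = ∫⁻ st : ℝ × ℝ, ∫⁻ q, kerf p (q, st) ∂γ ∂volume :=
        lintegral_lintegral_swap kerf_meas.aemeasurable
    _ = ∫⁻ st : ℝ × ℝ, (if st.1 < st.2 then kerK p st.1 st.2 else 0) * γ (Scor st.1 st.2) := by
        refine lintegral_congr fun st => ?_
        by_cases hst : st.1 < st.2
        · rw [if_pos hst]
          have : ∀ q : ℝ × ℝ, kerf p (q, st) = (Scor st.1 st.2).indicator
              (fun _ => kerK p st.1 st.2) q := by
            intro q
            classical
            simp only [kerf, Set.indicator_apply, Set.mem_setOf_eq, hst, true_and]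
          rw [lintegral_congr this, lintegral_indicator (Scor_meas _ _), setLIntegral_const]
        · rw [if_neg hst, zero_mul]
          have : ∀ q : ℝ × ℝ, kerf p (q, st) = 0 := by
            intro q
            classical
            simp only [kerf, Set.indicator_apply, Set.mem_setOf_eq, hst, false_and, if_false]
          rw [lintegral_congr this, lintegral_zero]

/-- the layer-cake integrand for `p = 1` -/
noncomputable def ker1 (z : (ℝ × ℝ) × ℝ) : ℝ≥0∞ :=
  ({w : (ℝ × ℝ) × ℝ | w.1 ∈ Scor w.2 w.2}.indicator 1) z

lemma ker1_meas : Measurable ker1 := by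
  have h2 : MeasurableSet {w : (ℝ × ℝ) × ℝ | w.1.2 ≤ w.2 ∧ w.2 < w.1.1} :=
    (measurableSet_le measurable_fst.snd measurable_snd).inter
      (measurableSet_lt measurable_snd measurable_fst.fst)
  have h3 : MeasurableSet {w : (ℝ × ℝ) × ℝ | w.1.1 ≤ w.2 ∧ w.2 < w.1.2} :=
    (measurableSet_le measurable_fst.fst measurable_snd).inter
      (measurableSet_lt measurable_snd measurable_fst.snd)
  exact measurable_one.indicator (h2.union h3)

lemma ker1_pointwise (x y : ℝ) :
    ∫⁻ t : ℝ, ker1 ((x, y), t) = ENNReal.ofReal |x - y| := by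
  have h : ∀ t : ℝ, ker1 ((x, y), t)
      = (Set.Ico y x ∪ Set.Ico x y).indicator 1 t := by
    intro t
    classical
    simp only [ker1, Set.indicator_apply, Set.mem_setOf_eq, Scor, Set.mem_union, Set.mem_Ico,
      Pi.one_apply]
  rw [lintegral_congr h, lintegral_indicator_one (measurableSet_Ico.union measurableSet_Ico)]
  rcases le_total y x with hyx | hxy
  · rw [Set.Ico_eq_empty (not_lt.2 hyx), Set.union_empty, Real.volume_Ico,
      abs_of_nonneg (sub_nonneg.2 hyx)]
  · rw [Set.Ico_eq_empty (not_lt.2 hxy), Set.empty_union, Real.volume_Ico, abs_sub_comm,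
      abs_of_nonneg (sub_nonneg.2 hxy)]

/-- layer-cake identity for a measure (p = 1) -/
lemma layer_one (γ : Measure (ℝ × ℝ)) [SFinite γ] :
    ∫⁻ q, ENNReal.ofReal |q.1 - q.2| ∂γ = ∫⁻ t : ℝ, γ (Scor t t) := by
  calc ∫⁻ q, ENNReal.ofReal |q.1 - q.2| ∂γ
      = ∫⁻ q, ∫⁻ t : ℝ, ker1 (q, t) ∂volume ∂γ :=
        lintegral_congr fun q => (ker1_pointwise q.1 q.2).symm
    _ = ∫⁻ t : ℝ, ∫⁻ q, ker1 (q, t) ∂γ ∂volume :=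
        lintegral_lintegral_swap ker1_meas.aemeasurable
    _ = ∫⁻ t : ℝ, γ (Scor t t) := by
        refine lintegral_congr fun t => ?_
        have : ∀ q : ℝ × ℝ, ker1 (q, t) = (Scor t t).indicator 1 q := fun q => rfl
        rw [lintegral_congr this, lintegral_indicator_one (Scor_meas t t)]

lemma rpow_abs_sub_le {p x y : ℝ} (hp : 1 ≤ p) :
    |x - y| ^ p ≤ 2 ^ p * (|x| ^ p + |y| ^ p) := by
  have hp0 : (0:ℝ) ≤ p := by linarith
  have h1 : |x - y| ^ p ≤ (2 * max |x| |y|) ^ p := by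
    apply Real.rpow_le_rpow (abs_nonneg _) _ hp0
    calc |x - y| ≤ |x| + |y| := abs_sub _ _
      _ ≤ 2 * max |x| |y| := by
          rcases le_total |x| |y| with h | h
          · rw [max_eq_right h]; linarith
          · rw [max_eq_left h]; linarith
  have hM : (0:ℝ) ≤ max |x| |y| := le_max_of_le_left (abs_nonneg _)
  have h2 : (2 * max |x| |y|) ^ p = 2 ^ p * (max |x| |y|) ^ p :=
    Real.mul_rpow (by norm_num) hM
  have h3 : (max |x| |y|) ^ p ≤ |x| ^ p + |y| ^ p := by
    rcases le_total |x| |y| with h | h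
    · rw [max_eq_right h]
      have := Real.rpow_nonneg (abs_nonneg x) p
      linarith
    · rw [max_eq_left h]
      have := Real.rpow_nonneg (abs_nonneg y) p
      linarith
  calc |x - y| ^ p ≤ (2 * max |x| |y|) ^ p := h1
    _ = 2 ^ p * (max |x| |y|) ^ p := h2
    _ ≤ 2 ^ p * (|x| ^ p + |y| ^ p) := by
        apply mul_le_mul_of_nonneg_left h3
        exact Real.rpow_nonneg (by norm_num) p

lemma moment_lintegral_ne_top {p : ℝ} (hp : 1 ≤ p) {P Q : Measure ℝ}
    (hPi : Integrable (fun x => |x| ^ p) P) (hQi : Integrable (fun x => |x| ^ p) Q)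
    (γ : Measure (ℝ × ℝ)) (hfst : γ.map Prod.fst = P) (hsnd : γ.map Prod.snd = Q) :
    ∫⁻ q, ENNReal.ofReal (|q.1 - q.2| ^ p) ∂γ ≠ ⊤ := by
  have hp0 : (0:ℝ) ≤ p := by linarith
  have hcont : Continuous fun a : ℝ => a ^ p := Real.continuous_rpow_const hp0
  have hm1 : Measurable fun a : ℝ => ENNReal.ofReal (2 ^ p * |a| ^ p) :=
    ENNReal.measurable_ofReal.comp
      (continuous_const.mul (hcont.comp continuous_abs)).measurable
  have hb : ∀ q : ℝ × ℝ, ENNReal.ofReal (|q.1 - q.2| ^ p)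
      ≤ ENNReal.ofReal (2 ^ p * |q.1| ^ p) + ENNReal.ofReal (2 ^ p * |q.2| ^ p) := by
    intro q
    rw [← ENNReal.ofReal_add (by positivity) (by positivity)]
    apply ENNReal.ofReal_le_ofReal
    calc |q.1 - q.2| ^ p ≤ 2 ^ p * (|q.1| ^ p + |q.2| ^ p) := rpow_abs_sub_le hp
      _ = 2 ^ p * |q.1| ^ p + 2 ^ p * |q.2| ^ p := by ring
  have hfin : ∀ (R : Measure ℝ), Integrable (fun x => |x| ^ p) R →
      (∫⁻ x, ENNReal.ofReal (2 ^ p * |x| ^ p) ∂(R)) ≠ ⊤ := by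
    intro R hRi
    have h2 := (hRi.const_mul (2 ^ p)).2
    rw [hasFiniteIntegral_iff_ofReal
      (Eventually.of_forall fun x => by positivity)] at h2
    exact h2.ne
  have e1 : ∫⁻ q : ℝ × ℝ, ENNReal.ofReal (2 ^ p * |q.1| ^ p) ∂γ
      = ∫⁻ x, ENNReal.ofReal (2 ^ p * |x| ^ p) ∂P := by
    rw [← hfst, lintegral_map hm1 measurable_fst]
  have e2 : ∫⁻ q : ℝ × ℝ, ENNReal.ofReal (2 ^ p * |q.2| ^ p) ∂γ
      = ∫⁻ x, ENNReal.ofReal (2 ^ p * |x| ^ p) ∂Q := by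
    rw [← hsnd, lintegral_map hm1 measurable_snd]
  refine ne_top_of_le_ne_top ?_ (lintegral_mono hb)
  rw [lintegral_add_left (f := fun q : ℝ × ℝ => ENNReal.ofReal (2 ^ p * |q.1| ^ p))
    (hm1.comp measurable_fst), e1, e2]
  exact ENNReal.add_ne_top.2 ⟨hfin P hPi, hfin Q hQi⟩


/-- `p`-th power of the Wasserstein-`p` distance on `ℝ`, via couplings. -/
noncomputable def WpPow (p : ℝ) (P Q : Measure ℝ) : ℝ :=
  sInf {c | ∃ γ : Measure (ℝ × ℝ),
    γ.map Prod.fst = P ∧ γ.map Prod.snd = Q ∧ c = ∫ q, |q.1 - q.2| ^ p ∂γ}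

/-- for one-dimensional measures with finite `p`-th moments,
`W_p(P,Q)^p` equals the `L^p` distance between the quantile functions. -/
theorem WpPow_eq_quantile_integral (p : ℝ) (hp : 1 ≤ p) (P Q : Measure ℝ)
    (hP : IsProbabilityMeasure P) (hQ : IsProbabilityMeasure Q)
    (hPi : Integrable (fun x => |x| ^ p) P) (hQi : Integrable (fun x => |x| ^ p) Q) :
    WpPow p P Q = ∫ t in Set.Ioo (0 : ℝ) 1, |quantile P t - quantile Q t| ^ p := by
  haveI := hP; haveI := hQ
  have hp0 : (0:ℝ) ≤ p := by linarith
  have hmeasI : Measurable fun q : ℝ × ℝ => |q.1 - q.2| ^ p :=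
    ((Real.continuous_rpow_const hp0).comp
      ((continuous_fst.sub continuous_snd).abs)).measurable
  -- the value of the quantile coupling is the right-hand side
  have hc0 : (∫ q, |q.1 - q.2| ^ p ∂(qcoup P Q))
      = ∫ t in Set.Ioo (0:ℝ) 1, |quantile P t - quantile Q t| ^ p := by
    rw [qcoup, integral_map qpair_measurable.aemeasurable hmeasI.aestronglyMeasurable]
    refine setIntegral_congr_fun measurableSet_Ioo fun u hu => ?_
    simp only
    rw [qm_eqOn hu, qm_eqOn hu]
  -- the quantile coupling minimizes the lintegral of the cost
  have hL : ∀ γ : Measure (ℝ × ℝ), IsProbabilityMeasure γ → γ.map Prod.fst = P →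
      γ.map Prod.snd = Q →
      (∫⁻ q, ENNReal.ofReal (|q.1 - q.2| ^ p) ∂(qcoup P Q))
        ≤ ∫⁻ q, ENNReal.ofReal (|q.1 - q.2| ^ p) ∂γ := by
    intro γ hγ h1 h2
    haveI := hγ
    rcases eq_or_lt_of_le hp with hpe | hpl
    · have e : ∀ γ' : Measure (ℝ × ℝ), ∫⁻ q, ENNReal.ofReal (|q.1 - q.2| ^ p) ∂γ'
          = ∫⁻ q, ENNReal.ofReal |q.1 - q.2| ∂γ' := by
        intro γ'
        refine lintegral_congr fun q => ?_
        rw [← hpe, Real.rpow_one]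
      rw [e, e, layer_one, layer_one]
      exact lintegral_mono fun t => qcoup_Scor_le γ h1 h2 le_rfl
    · rw [layer_gt hpl, layer_gt hpl]
      refine lintegral_mono fun st => ?_
      by_cases hst : st.1 < st.2
      · exact mul_le_mul_right (qcoup_Scor_le γ h1 h2 hst.le) _
      · simp [hst]
  have hconv : ∀ γ : Measure (ℝ × ℝ), (∫ q, |q.1 - q.2| ^ p ∂γ)
      = (∫⁻ q, ENNReal.ofReal (|q.1 - q.2| ^ p) ∂γ).toReal := fun γ =>
    integral_eq_lintegral_of_nonneg_ae
      (Eventually.of_forall fun q => Real.rpow_nonneg (abs_nonneg _) _)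
      hmeasI.aestronglyMeasurable
  have hprob : ∀ γ : Measure (ℝ × ℝ), γ.map Prod.fst = P → IsProbabilityMeasure γ := by
    intro γ h1
    constructor
    have h2 : γ.map Prod.fst Set.univ = P Set.univ := by rw [h1]
    rw [Measure.map_apply measurable_fst MeasurableSet.univ, Set.preimage_univ] at h2
    rw [h2, measure_univ]
  have hmem : (∫ t in Set.Ioo (0:ℝ) 1, |quantile P t - quantile Q t| ^ p) ∈
      {c | ∃ γ : Measure (ℝ × ℝ),
        γ.map Prod.fst = P ∧ γ.map Prod.snd = Q ∧ c = ∫ q, |q.1 - q.2| ^ p ∂γ} :=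
    ⟨qcoup P Q, qcoup_fst, qcoup_snd, hc0.symm⟩
  have hbdd : BddBelow {c | ∃ γ : Measure (ℝ × ℝ),
      γ.map Prod.fst = P ∧ γ.map Prod.snd = Q ∧ c = ∫ q, |q.1 - q.2| ^ p ∂γ} := by
    refine ⟨0, ?_⟩
    rintro c ⟨γ, -, -, rfl⟩
    exact integral_nonneg fun q => Real.rpow_nonneg (abs_nonneg _) _
  rw [WpPow]
  refine le_antisymm (csInf_le hbdd hmem) (le_csInf ⟨_, hmem⟩ ?_)
  rintro c ⟨γ, h1, h2, rfl⟩
  haveI := hprob γ h1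
  rw [← hc0, hconv (qcoup P Q), hconv γ]
  exact ENNReal.toReal_mono (moment_lintegral_ne_top hp hPi hQi γ h1 h2) (hL γ inferInstance h1 h2)
end

section
/- If b is the sorted (nondecreasing) rearrangement of a real sequence, then for any other sequence c and any convex cost, the monotone matching minimizes total cost: for sorted sequences a_1 ≤ ... ≤ a_N and z_1 ≤ ... ≤ z_N, and any permutation σ, Σ_i |a_i − z_i|^p ≤ Σ_i |a_i − z_{σ(i)}|^p for all p ≥ 1. -/
/-- Exchange inequality for a convex function: if `u' ≤ u`, `u' ≤ v` and
`u + v = u' + v'`, then `g u + g v ≤ g u' + g v'`. -/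
lemma convex_exchange {g : ℝ → ℝ} (hg : ConvexOn ℝ Set.univ g)
    {u v u' v' : ℝ} (h1 : u' ≤ u) (h2 : u' ≤ v) (hsum : u + v = u' + v') :
    g u + g v ≤ g u' + g v' := by
  have huv' : u ≤ v' := by linarith
  have hvv' : v ≤ v' := by linarith
  rcases eq_or_lt_of_le (h1.trans huv') with h | h
  · have hu : u = u' := le_antisymm (by linarith) h1
    have hv : v = v' := by linarith
    rw [hu, hv]
  · set d : ℝ := v' - u' with hd
    have hdpos : 0 < d := sub_pos.2 h
    have key : ∀ w : ℝ, u' ≤ w → w ≤ v' →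
        g w ≤ ((v' - w) / d) * g u' + ((w - u') / d) * g v' := by
      intro w hw1 hw2
      have hla : 0 ≤ (v' - w) / d := div_nonneg (by linarith) hdpos.le
      have hlb : 0 ≤ (w - u') / d := div_nonneg (by linarith) hdpos.le
      have hlab : (v' - w) / d + (w - u') / d = 1 := by
        field_simp
        rw [hd]; ring
      have := hg.2 (Set.mem_univ u') (Set.mem_univ v') hla hlb hlab
      simp only [smul_eq_mul] at this
      have hw : (v' - w) / d * u' + (w - u') / d * v' = w := by
        field_simp
        rw [hd]
        ring
      rw [hw] at this
      exact this
    have k1 := key u h1 huv'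
    have k2 := key v h2 hvv'
    have hcoef : (v' - u) / d + (v' - v) / d = 1 := by
      field_simp; linarith
    have hcoef2 : (u - u') / d + (v - u') / d = 1 := by
      field_simp; linarith
    have e1 : (v' - u) / d * g u' + (v' - v) / d * g u' = g u' := by
      rw [← add_mul, hcoef, one_mul]
    have e2 : (u - u') / d * g v' + (v - u') / d * g v' = g v' := by
      rw [← add_mul, hcoef2, one_mul]
    linarith

/-- The quadrangle inequality for the cost `|x - y| ^ p`, `p ≥ 1`. -/
lemma quad_ineq {p : ℝ} (hp : 1 ≤ p) {x x' y y' : ℝ} (hx : x ≤ x') (hy : y ≤ y') :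
    |x - y| ^ p + |x' - y'| ^ p ≤ |x - y'| ^ p + |x' - y| ^ p := by
  have habs : (abs '' (Set.univ : Set ℝ)) = Set.Ici 0 := by
    ext t
    simp only [Set.image_univ, Set.mem_range, Set.mem_Ici]
    constructor
    · rintro ⟨s, rfl⟩; exact abs_nonneg s
    · intro ht; exact ⟨t, abs_of_nonneg ht⟩
  have hconv : ConvexOn ℝ Set.univ (fun t : ℝ => |t| ^ p) := by
    have h1 : ConvexOn ℝ (abs '' (Set.univ : Set ℝ)) (fun t : ℝ => t ^ p) := by
      rw [habs]; exact convexOn_rpow hp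
    have h2 : ConvexOn ℝ (Set.univ : Set ℝ) (abs : ℝ → ℝ) := by
      have hn : (abs : ℝ → ℝ) = (norm : ℝ → ℝ) :=
        funext fun x => (Real.norm_eq_abs x).symm
      rw [hn]
      exact convexOn_univ_norm
    have h3 : MonotoneOn (fun t : ℝ => t ^ p) (abs '' (Set.univ : Set ℝ)) := by
      rw [habs]
      intro s hs t ht hst
      exact Real.rpow_le_rpow hs hst (le_trans zero_le_one hp)
    exact h1.comp h2 h3
  exact convex_exchange hconv (by linarith : x - y' ≤ x - y)
    (by linarith : x - y' ≤ x' - y') (by ring)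

/-- Comparing two sums that differ only at two indices (real version). -/
lemma sum_pair_le {N : ℕ} {G G' : Fin N → ℝ} {i j : Fin N} (hij : i ≠ j)
    (h : ∀ k, k ≠ i → k ≠ j → G' k = G k) (h2 : G' i + G' j ≤ G i + G j) :
    ∑ k, G' k ≤ ∑ k, G k := by
  classical
  have hj : j ∈ (Finset.univ.erase i) := Finset.mem_erase.2 ⟨hij.symm, Finset.mem_univ j⟩
  have split : ∀ F : Fin N → ℝ,
      ∑ k, F k = ∑ k ∈ ((Finset.univ.erase i).erase j), F k + F j + F i := by
    intro F
    rw [Finset.sum_erase_add _ _ hj, Finset.sum_erase_add _ _ (Finset.mem_univ i)]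
  rw [split G, split G']
  have heq : ∑ k ∈ ((Finset.univ.erase i).erase j), G' k
      = ∑ k ∈ ((Finset.univ.erase i).erase j), G k := by
    apply Finset.sum_congr rfl
    intro k hk
    rw [Finset.mem_erase, Finset.mem_erase] at hk
    exact h k hk.2.1 hk.1
  rw [heq]
  linarith

/-- Comparing two sums that differ only at two indices (nat, strict version). -/
lemma sum_pair_lt_nat {N : ℕ} {G G' : Fin N → ℕ} {i j : Fin N} (hij : i ≠ j)
    (h : ∀ k, k ≠ i → k ≠ j → G' k = G k) (h2 : G' i + G' j < G i + G j) :
    ∑ k, G' k < ∑ k, G k := by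
  classical
  have hj : j ∈ (Finset.univ.erase i) := Finset.mem_erase.2 ⟨hij.symm, Finset.mem_univ j⟩
  have split : ∀ F : Fin N → ℕ,
      ∑ k, F k = ∑ k ∈ ((Finset.univ.erase i).erase j), F k + F j + F i := by
    intro F
    rw [Finset.sum_erase_add _ _ hj, Finset.sum_erase_add _ _ (Finset.mem_univ i)]
  rw [split G, split G']
  have heq : ∑ k ∈ ((Finset.univ.erase i).erase j), G' k
      = ∑ k ∈ ((Finset.univ.erase i).erase j), G k := by
    apply Finset.sum_congr rfl
    intro k hk
    rw [Finset.mem_erase, Finset.mem_erase] at hk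
    exact h k hk.2.1 hk.1
  omega

/-- A nonidentity permutation of `Fin N` has an adjacent inversion. -/
lemma exists_adjacent_inversion {N : ℕ} (σ : Equiv.Perm (Fin N)) (hσ : σ ≠ 1) :
    ∃ i : ℕ, ∃ h : i + 1 < N,
      σ ⟨i + 1, h⟩ < σ ⟨i, Nat.lt_of_succ_lt h⟩ := by
  by_contra hcon
  push_neg at hcon
  obtain ⟨M, rfl⟩ : ∃ M, N = M + 1 := by
    rcases N with _ | M
    · exact absurd (Subsingleton.elim σ 1) hσ
    · exact ⟨M, rfl⟩
  have hmono : Monotone (σ : Fin (M+1) → Fin (M+1)) := by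
    rw [Fin.monotone_iff_le_succ]
    intro i
    have hi : (i : ℕ) + 1 < M + 1 := Nat.succ_lt_succ i.isLt
    have := hcon i hi
    have e1 : Fin.castSucc i = (⟨(i : ℕ), Nat.lt_of_succ_lt hi⟩ : Fin (M+1)) := rfl
    have e2 : Fin.succ i = (⟨(i : ℕ) + 1, hi⟩ : Fin (M+1)) := rfl
    rw [e1, e2]
    exact this
  have hsm : StrictMono (σ : Fin (M+1) → Fin (M+1)) :=
    hmono.strictMono_of_injective σ.injective
  have hrange : Set.range (σ : Fin (M+1) → Fin (M+1))
      = Set.range (id : Fin (M+1) → Fin (M+1)) := by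
    rw [σ.surjective.range_eq, Set.range_id]
  haveI : WellFoundedLT (Fin (M+1)) := Finite.to_wellFoundedLT
  have : (σ : Fin (M+1) → Fin (M+1)) = id := (hsm.range_inj strictMono_id).1 hrange
  apply hσ
  ext x
  exact congrArg Fin.val (congrFun this x)

/-- rearrangement inequality — for sorted (nondecreasing)
sequences `a` and `z` and any permutation `σ`, the monotone matching minimizes
the total cost `∑ |a i - z (σ i)|^p` for every `p ≥ 1`. -/
theorem monotone_matching_optimal (N : ℕ) (a z : Fin N → ℝ)
    (ha : Monotone a) (hz : Monotone z) (σ : Equiv.Perm (Fin N))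
    (p : ℝ) (hp : 1 ≤ p) :
    ∑ i, |a i - z i| ^ p ≤ ∑ i, |a i - z (σ i)| ^ p := by
  classical
  set D : Equiv.Perm (Fin N) → ℕ :=
    fun τ => ∑ k : Fin N, (k : ℕ) * (N - (τ k : ℕ)) with hD
  suffices H : ∀ n : ℕ, ∀ τ : Equiv.Perm (Fin N), D τ = n →
      ∑ i, |a i - z i| ^ p ≤ ∑ i, |a i - z (τ i)| ^ p from H (D σ) σ rfl
  intro n
  induction n using Nat.strong_induction_on with
  | _ n ih =>
    intro τ hn
    by_cases hτ : τ = 1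
    · subst hτ; simp
    · obtain ⟨i, hi, hinv⟩ := exists_adjacent_inversion τ hτ
      set ii : Fin N := ⟨i, Nat.lt_of_succ_lt hi⟩ with hii
      set jj : Fin N := ⟨i + 1, hi⟩ with hjj
      have hij : ii ≠ jj := by
        intro hcon
        have : i = i + 1 := congrArg Fin.val hcon
        omega
      set τ' : Equiv.Perm (Fin N) := τ * Equiv.swap ii jj with hτ'
      have hτ'i : τ' ii = τ jj := by
        simp [hτ', Equiv.Perm.mul_apply, Equiv.swap_apply_left]
      have hτ'j : τ' jj = τ ii := by
        simp [hτ', Equiv.Perm.mul_apply, Equiv.swap_apply_right]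
      have hτ'k : ∀ k, k ≠ ii → k ≠ jj → τ' k = τ k := by
        intro k h1 h2
        simp [hτ', Equiv.Perm.mul_apply, Equiv.swap_apply_of_ne_of_ne h1 h2]
      -- the measure strictly decreases
      have hDlt : D τ' < D τ := by
        apply sum_pair_lt_nat hij
        · intro k h1 h2; rw [hτ'k k h1 h2]
        · rw [hτ'i, hτ'j]
          have h1 : (τ jj : ℕ) < (τ ii : ℕ) := hinv
          have h2 : (τ ii : ℕ) < N := (τ ii).2
          have e1 : (ii : ℕ) = i := rfl
          have e2 : (jj : ℕ) = i + 1 := rfl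
          rw [e1, e2]
          have : i * (N - (τ jj : ℕ)) + (i+1) * (N - (τ ii : ℕ))
              < i * (N - (τ ii : ℕ)) + (i+1) * (N - (τ jj : ℕ)) := by
            have hA : (N - (τ jj : ℕ)) = (N - (τ ii : ℕ)) + ((τ ii : ℕ) - (τ jj : ℕ)) := by
              omega
            nlinarith [Nat.sub_pos_of_lt h1, Nat.mul_le_mul_left i (Nat.le_refl 1)]
          omega
      -- compare sums for τ' and τ
      have hsums : ∑ k, |a k - z (τ' k)| ^ p ≤ ∑ k, |a k - z (τ k)| ^ p := by
        apply sum_pair_le hij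
        · intro k h1 h2; rw [hτ'k k h1 h2]
        · rw [hτ'i, hτ'j]
          have haij : a ii ≤ a jj := ha (by
            show ii ≤ jj
            simp [hii, hjj, Fin.le_def])
          have hzij : z (τ jj) ≤ z (τ ii) := hz hinv.le
          exact quad_ineq hp haij hzij
      exact le_trans (ih (D τ') (hn ▸ hDlt) τ' rfl) hsums
end
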